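/- (Lemma 5.7, discrete Laplace estimate on the simplex.) Let g ≥ 1, let f⋆ lie in the simplex 𝓔_g = {f ∈ ℝ^g : f_h ≥ 0 for all h, Σ_h f_h = 1}, and let κ > 0. Let F₂, F₁ : 𝓔_g → ℝ satisfy, for some constants c, C > 0 and all f ∈ 𝓔_g with |f - f⋆| ≤ κ: (i) |F₁(f) - F₁(f⋆)| ≤ C|f - f⋆|; (ii) F₂(f) - F₂(f⋆) ≤ -c|f - f⋆|²; (iii) |F₂(f) - F₂(f⋆)| ≤ C|f - f⋆|². Define for each positive integer K: L_K := Σ exp( K² F₂(N⃗/K) + K F₁(N⃗/K) ), the sum being over integer vectors N⃗ = (N₁,…,N_g) with nonnegative entries, Σ_h N_h = K, and |N⃗/K - f⋆| < κ. Then there exist constants c', C' > 0 such that for all sufficiently large K: c' · exp( K² F₂(f⋆) + K F₁(f⋆) ) ≤ L_K ≤ C' · exp( K² F₂(f⋆) + K F₁(f⋆) ). -/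
import Mathlib


open Filter

noncomputable section

/-- Euclidean distance on `Fin g → ℝ`. -/
def eucDist {g : ℕ} (f f' : Fin g → ℝ) : ℝ := Real.sqrt (∑ h, (f h - f' h) ^ 2)

/-- The sum `L_K = Σ_{N⃗} exp(K² F₂(N⃗/K) + K F₁(N⃗/K))` over integer vectors `N⃗` with
nonnegative entries summing to `K` and `|N⃗/K - f⋆| < κ`. -/
def simplexLaplaceSum (g : ℕ) (fstar : Fin g → ℝ) (κ : ℝ)
    (F₂ F₁ : (Fin g → ℝ) → ℝ) (K : ℕ) : ℝ :=
  ∑ Nv : Fin g → Fin (K + 1),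
    Set.indicator
      {Nv : Fin g → Fin (K + 1) | (∑ h, ((Nv h : ℕ)) = K) ∧
        eucDist (fun h => ((Nv h : ℕ) : ℝ) / (K : ℝ)) fstar < κ}
      (fun Nv => Real.exp ((K : ℝ) ^ 2 * F₂ (fun h => ((Nv h : ℕ) : ℝ) / (K : ℝ)) +
        (K : ℝ) * F₁ (fun h => ((Nv h : ℕ) : ℝ) / (K : ℝ)))) Nv

end

lemma geom_bound (r : ℝ) (h0 : 0 ≤ r) (h1 : r < 1) (n : ℕ) :
    ∑ k ∈ Finset.range n, r ^ k ≤ 1 / (1 - r) := by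
  have h1r : 0 < 1 - r := by linarith
  rw [geom_sum_eq (by intro h; rw [h] at h1; exact lt_irrefl _ h1)]
  have h2 : (r ^ n - 1) / (r - 1) = (1 - r ^ n) / (1 - r) := by
    rw [div_eq_div_iff (by linarith) (by linarith)]; ring
  rw [h2]
  have hpn : 0 ≤ r ^ n := pow_nonneg h0 n
  gcongr
  linarith

lemma key1 (t : ℝ) (ht : 0 < t) (u : ℝ) (k : ℕ) (h : (k : ℝ) - 1 ≤ |u|) :
    Real.exp (-(t * u ^ 2)) ≤ Real.exp (3 * t / 2) * Real.exp (-t) ^ k := by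
  rw [← Real.exp_nat_mul, ← Real.exp_add, Real.exp_le_exp]
  have hk : (k : ℝ) ≤ u ^ 2 + 3 / 2 := by
    rcases Nat.eq_zero_or_pos k with hk0 | hk0
    · subst hk0; simp; positivity
    · have h1 : (1 : ℝ) ≤ (k : ℝ) := by exact_mod_cast hk0
      nlinarith [sq_abs u, abs_nonneg u]
  nlinarith

lemma oneD (t : ℝ) (ht : 0 < t) (K : ℕ) (a : ℝ) (ha0 : 0 ≤ a) (haK : a ≤ K) :
    ∑ n ∈ Finset.range (K + 1), Real.exp (-(t * ((n : ℝ) - a) ^ 2)) ≤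
      Real.exp (3 * t / 2) * (2 / (1 - Real.exp (-t))) := by
  set r := Real.exp (-t) with hr
  have hr0 : 0 ≤ r := (Real.exp_pos _).le
  have hr1 : r < 1 := Real.exp_lt_one_iff.mpr (by linarith)
  set b := ⌊a⌋₊ with hb
  have hbK : b ≤ K := by
    calc b ≤ ⌊(K : ℝ)⌋₊ := Nat.floor_le_floor haK
    _ = K := Nat.floor_natCast K
  have hba : (b : ℝ) ≤ a := Nat.floor_le ha0
  have hab : a < (b : ℝ) + 1 := Nat.lt_floor_add_one a
  have hsplit : ∑ n ∈ Finset.range (K + 1), Real.exp (-(t * ((n : ℝ) - a) ^ 2)) =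
      (∑ n ∈ Finset.range b, Real.exp (-(t * ((n : ℝ) - a) ^ 2))) +
      ∑ n ∈ Finset.Ico b (K + 1), Real.exp (-(t * ((n : ℝ) - a) ^ 2)) := by
    rw [Finset.range_eq_Ico, ← Finset.sum_Ico_consecutive _ (Nat.zero_le b)
      (by omega : b ≤ K + 1), ← Finset.range_eq_Ico]
  rw [hsplit]
  have hB1 : (∑ n ∈ Finset.range b, Real.exp (-(t * ((n : ℝ) - a) ^ 2))) ≤
      Real.exp (3 * t / 2) * (1 / (1 - r)) := by
    calc (∑ n ∈ Finset.range b, Real.exp (-(t * ((n : ℝ) - a) ^ 2)))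
        ≤ ∑ n ∈ Finset.range b, Real.exp (3 * t / 2) * r ^ (b - n) := by
          apply Finset.sum_le_sum
          intro n hn
          rw [Finset.mem_range] at hn
          apply key1 t ht
          have h1 : ((b - n : ℕ) : ℝ) = (b : ℝ) - n := by
            rw [Nat.cast_sub hn.le]
          rw [h1]
          have h2 : a - n ≤ |(n : ℝ) - a| := by
            rw [abs_sub_comm]; exact le_abs_self _
          linarith
      _ = Real.exp (3 * t / 2) * ∑ n ∈ Finset.range b, r ^ (b - n) := by
          rw [Finset.mul_sum]
      _ ≤ Real.exp (3 * t / 2) * (1 / (1 - r)) := by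
          apply mul_le_mul_of_nonneg_left _ (Real.exp_pos _).le
          have hrefl : ∑ n ∈ Finset.range b, r ^ (b - n) =
              ∑ n ∈ Finset.range b, r ^ (n + 1) := by
            rw [← Finset.sum_range_reflect]
            apply Finset.sum_congr rfl
            intro j hj
            rw [Finset.mem_range] at hj
            congr 1
            omega
          rw [hrefl]
          calc ∑ n ∈ Finset.range b, r ^ (n + 1) ≤ ∑ n ∈ Finset.range b, r ^ n := by
                apply Finset.sum_le_sum
                intro n _
                exact pow_le_pow_of_le_one hr0 hr1.le (by omega)
            _ ≤ 1 / (1 - r) := geom_bound r hr0 hr1 b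
  have hB2 : (∑ n ∈ Finset.Ico b (K + 1), Real.exp (-(t * ((n : ℝ) - a) ^ 2))) ≤
      Real.exp (3 * t / 2) * (1 / (1 - r)) := by
    calc (∑ n ∈ Finset.Ico b (K + 1), Real.exp (-(t * ((n : ℝ) - a) ^ 2)))
        ≤ ∑ n ∈ Finset.Ico b (K + 1), Real.exp (3 * t / 2) * r ^ (n - b) := by
          apply Finset.sum_le_sum
          intro n hn
          rw [Finset.mem_Ico] at hn
          apply key1 t ht
          have h1 : ((n - b : ℕ) : ℝ) = (n : ℝ) - b := by
            rw [Nat.cast_sub hn.1]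
          rw [h1]
          have h2 : (n : ℝ) - a ≤ |(n : ℝ) - a| := le_abs_self _
          linarith
      _ = Real.exp (3 * t / 2) * ∑ n ∈ Finset.Ico b (K + 1), r ^ (n - b) := by
          rw [Finset.mul_sum]
      _ ≤ Real.exp (3 * t / 2) * (1 / (1 - r)) := by
          apply mul_le_mul_of_nonneg_left _ (Real.exp_pos _).le
          rw [Finset.sum_Ico_eq_sum_range]
          have heq : ∀ i ∈ Finset.range (K + 1 - b), r ^ (b + i - b) = r ^ i := by
            intro i _; congr 1; omega
          rw [Finset.sum_congr rfl heq]
          exact geom_bound r hr0 hr1 _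
  have hsum2 : Real.exp (3 * t / 2) * (2 / (1 - r)) =
      Real.exp (3 * t / 2) * (1 / (1 - r)) + Real.exp (3 * t / 2) * (1 / (1 - r)) := by
    ring
  rw [hsum2]
  linarith

set_option maxHeartbeats 1600000 in
/-- Lemma 5.7: discrete Laplace estimate on the simplex:
`L_K ≍ exp(K² F₂(f⋆) + K F₁(f⋆))` for large `K`. -/
theorem simplex_laplace_estimate (g : ℕ) (hg : 1 ≤ g)
    (fstar : Fin g → ℝ) (hfpos : ∀ h, 0 ≤ fstar h) (hfsum : ∑ h, fstar h = 1)
    (κ : ℝ) (hκ : 0 < κ) (F₂ F₁ : (Fin g → ℝ) → ℝ)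
    (c C : ℝ) (hc : 0 < c) (hC : 0 < C)
    (h₁ : ∀ f : Fin g → ℝ, (∀ h, 0 ≤ f h) → ∑ h, f h = 1 → eucDist f fstar ≤ κ →
      |F₁ f - F₁ fstar| ≤ C * eucDist f fstar)
    (h₂ : ∀ f : Fin g → ℝ, (∀ h, 0 ≤ f h) → ∑ h, f h = 1 → eucDist f fstar ≤ κ →
      F₂ f - F₂ fstar ≤ -c * eucDist f fstar ^ 2)
    (h₃ : ∀ f : Fin g → ℝ, (∀ h, 0 ≤ f h) → ∑ h, f h = 1 → eucDist f fstar ≤ κ →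
      |F₂ f - F₂ fstar| ≤ C * eucDist f fstar ^ 2) :
    ∃ c' C' : ℝ, 0 < c' ∧ 0 < C' ∧ ∃ K₀ : ℕ, ∀ K : ℕ, K₀ ≤ K →
      c' * Real.exp ((K : ℝ) ^ 2 * F₂ fstar + (K : ℝ) * F₁ fstar) ≤
        simplexLaplaceSum g fstar κ F₂ F₁ K ∧
      simplexLaplaceSum g fstar κ F₂ F₁ K ≤
        C' * Real.exp ((K : ℝ) ^ 2 * F₂ fstar + (K : ℝ) * F₁ fstar) := by
  classical
  have hgR : (1 : ℝ) ≤ (g : ℝ) := by exact_mod_cast hg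
  have hfle : ∀ h, fstar h ≤ 1 := by
    intro h
    calc fstar h ≤ ∑ h', fstar h' :=
          Finset.single_le_sum (fun i _ => hfpos i) (Finset.mem_univ h)
      _ = 1 := hfsum
  set t : ℝ := c / 2 with ht
  have ht0 : 0 < t := by rw [ht]; positivity
  have hrexp : Real.exp (-t) < 1 := Real.exp_lt_one_iff.mpr (by linarith)
  have hrpos : 0 < 1 - Real.exp (-t) := by linarith
  set D : ℝ := Real.exp (3 * t / 2) * (2 / (1 - Real.exp (-t))) with hD
  have hD0 : 0 < D := by
    rw [hD]; positivity
  refine ⟨Real.exp (-(C * (g : ℝ) ^ 3 + C * (g : ℝ) ^ 2)),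
    Real.exp (C ^ 2 / (2 * c)) * D ^ g, Real.exp_pos _, by positivity,
    max 1 (⌈(g : ℝ) ^ 2 / κ⌉₊ + 1), ?_⟩
  intro K hK
  have hK1 : 1 ≤ K := le_trans (le_max_left _ _) hK
  have hK0 : (0 : ℝ) < K := by exact_mod_cast hK1
  have hKκ : (g : ℝ) ^ 2 / K < κ := by
    have h1 : ⌈(g : ℝ) ^ 2 / κ⌉₊ + 1 ≤ K := le_trans (le_max_right _ _) hK
    have h2 : ((⌈(g : ℝ) ^ 2 / κ⌉₊ : ℝ)) < K := by exact_mod_cast Nat.lt_of_succ_le h1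
    have h3 : (g : ℝ) ^ 2 / κ < K := lt_of_le_of_lt (Nat.le_ceil _) h2
    rw [div_lt_iff₀ hK0]
    rw [div_lt_iff₀ hκ] at h3
    nlinarith
  set E : ℝ := (K : ℝ) ^ 2 * F₂ fstar + (K : ℝ) * F₁ fstar with hE
  constructor
  · -- LOWER BOUND
    have hlast : g - 1 < g := by omega
    set lst : Fin g := ⟨g - 1, hlast⟩ with hlstdef
    set e : Finset (Fin g) := Finset.univ.erase lst with he
    set Sn : ℕ := ∑ h ∈ e, ⌊(K : ℝ) * fstar h⌋₊ with hSn
    have hSnR : (Sn : ℝ) ≤ ∑ h ∈ e, (K : ℝ) * fstar h := by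
      rw [hSn]; push_cast
      exact Finset.sum_le_sum fun h _ => Nat.floor_le (mul_nonneg hK0.le (hfpos h))
    have hesum : fstar lst + ∑ h ∈ e, fstar h = 1 := by
      rw [he, Finset.add_sum_erase _ _ (Finset.mem_univ lst), hfsum]
    have hSnK : (Sn : ℝ) ≤ K := by
      have hms : ∑ h ∈ e, (K : ℝ) * fstar h = K * ∑ h ∈ e, fstar h := by
        rw [Finset.mul_sum]
      nlinarith [hfpos lst]
    have hSnKn : Sn ≤ K := by exact_mod_cast hSnK
    set M : Fin g → ℕ := fun h => if h = lst then K - Sn else ⌊(K : ℝ) * fstar h⌋₊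
      with hM
    have hMe : ∀ h ∈ e, M h = ⌊(K : ℝ) * fstar h⌋₊ := by
      intro h hh
      rw [hM]
      exact if_neg (Finset.ne_of_mem_erase hh)
    have hMlstn : M lst = K - Sn := by rw [hM]; simp
    have hMsum : ∑ h, M h = K := by
      rw [← Finset.add_sum_erase _ _ (Finset.mem_univ lst), ← he,
        Finset.sum_congr rfl hMe, hMlstn, ← hSn]
      omega
    have hMle : ∀ h, M h ≤ K := by
      intro h
      by_cases hh : h = lst
      · rw [hh, hMlstn]; omega
      · have hMh : M h = ⌊(K : ℝ) * fstar h⌋₊ := by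
          simp only [hM]; rw [if_neg hh]
        rw [hMh]
        calc ⌊(K : ℝ) * fstar h⌋₊ ≤ ⌊(K : ℝ)⌋₊ :=
              Nat.floor_le_floor (by nlinarith [hfle h, hfpos h])
          _ = K := Nat.floor_natCast K
    have hMlast : ((M lst : ℕ) : ℝ) = (K : ℝ) - Sn := by
      rw [hMlstn, Nat.cast_sub hSnKn]
    have hcb : ∀ h, |(M h : ℝ) - K * fstar h| ≤ (g : ℝ) := by
      intro h
      by_cases hh : h = lst
      · rw [hh]
        have hdiff : ((M lst : ℕ) : ℝ) - K * fstar lst =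
            ∑ h' ∈ e, ((K : ℝ) * fstar h' - (⌊(K : ℝ) * fstar h'⌋₊ : ℝ)) := by
          rw [Finset.sum_sub_distrib, hMlast]
          have h2 : (K : ℝ) * fstar lst = K - ∑ h' ∈ e, (K : ℝ) * fstar h' := by
            rw [← Finset.mul_sum]; nlinarith [hesum]
          rw [h2, hSn]
          push_cast
          ring
        rw [hdiff, abs_le]
        constructor
        · have hnn : 0 ≤ ∑ h' ∈ e, ((K : ℝ) * fstar h' - (⌊(K : ℝ) * fstar h'⌋₊ : ℝ)) :=
            Finset.sum_nonneg fun h' _ => by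
              have := Nat.floor_le (mul_nonneg hK0.le (hfpos h'))
              linarith
          linarith
        · calc ∑ h' ∈ e, ((K : ℝ) * fstar h' - (⌊(K : ℝ) * fstar h'⌋₊ : ℝ))
              ≤ ∑ _h' ∈ e, (1 : ℝ) := by
                apply Finset.sum_le_sum
                intro h' _
                have := Nat.lt_floor_add_one ((K : ℝ) * fstar h')
                linarith
            _ = (e.card : ℝ) := by rw [Finset.sum_const]; simp
            _ ≤ (g : ℝ) := by
                have hcard : e.card = g - 1 := by
                  rw [he, Finset.card_erase_of_mem (Finset.mem_univ _),
                    Finset.card_univ, Fintype.card_fin]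
                rw [hcard]
                have hle : ((g - 1 : ℕ) : ℝ) ≤ ((g : ℕ) : ℝ) := by
                  exact_mod_cast Nat.sub_le g 1
                exact hle
      · have hMh : (M h : ℝ) = (⌊(K : ℝ) * fstar h⌋₊ : ℝ) := by
          simp only [hM]; rw [if_neg hh]
        rw [hMh, abs_le]
        have hfl := Nat.floor_le (mul_nonneg hK0.le (hfpos h))
        have hfu := Nat.lt_floor_add_one ((K : ℝ) * fstar h)
        constructor <;> nlinarith
    have hsumsq : ∑ h, ((M h : ℝ) - K * fstar h) ^ 2 ≤ (g : ℝ) ^ 3 := by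
      calc ∑ h, ((M h : ℝ) - K * fstar h) ^ 2 ≤ ∑ _h : Fin g, (g : ℝ) ^ 2 := by
            apply Finset.sum_le_sum
            intro h _
            have h1 := hcb h
            nlinarith [abs_nonneg ((M h : ℝ) - K * fstar h),
              sq_abs ((M h : ℝ) - K * fstar h)]
        _ = (g : ℝ) * (g : ℝ) ^ 2 := by
            rw [Finset.sum_const, Finset.card_univ, Fintype.card_fin, nsmul_eq_mul]
        _ = (g : ℝ) ^ 3 := by ring
    set Nv : Fin g → Fin (K + 1) := fun h => ⟨M h, Nat.lt_succ_of_le (hMle h)⟩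
      with hNv
    have hval : ∀ h, ((Nv h : ℕ)) = M h := fun _ => rfl
    set f : Fin g → ℝ := fun h => ((Nv h : ℕ) : ℝ) / (K : ℝ) with hf
    have hfM : ∀ h, f h = (M h : ℝ) / K := fun h => rfl
    have hf0 : ∀ h, 0 ≤ f h := fun h =>
      div_nonneg (Nat.cast_nonneg _) (Nat.cast_nonneg _)
    have hf1 : ∑ h, f h = 1 := by
      have hthis : ∑ h, f h = ((∑ h, M h : ℕ) : ℝ) / K := by
        push_cast
        rw [Finset.sum_div]
      rw [hthis, hMsum]
      field_simp
    set d : ℝ := eucDist f fstar with hd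
    have hd0 : 0 ≤ d := Real.sqrt_nonneg _
    have hd2 : d ^ 2 = ∑ h, (f h - fstar h) ^ 2 := by
      rw [hd, eucDist]
      exact Real.sq_sqrt (Finset.sum_nonneg fun h _ => sq_nonneg _)
    have hKf : ∀ h, (K : ℝ) * f h = (M h : ℝ) := by
      intro h; rw [hfM]; field_simp
    have hx2 : ((K : ℝ) * d) ^ 2 = ∑ h, ((M h : ℝ) - K * fstar h) ^ 2 := by
      rw [mul_pow, hd2, Finset.mul_sum]
      apply Finset.sum_congr rfl
      intro h _
      rw [← hKf h]
      ring
    have hKd2 : ((K : ℝ) * d) ^ 2 ≤ (g : ℝ) ^ 3 := hx2 ▸ hsumsq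
    have hKd : (K : ℝ) * d ≤ (g : ℝ) ^ 2 := by
      have hg34 : ((K : ℝ) * d) ^ 2 ≤ ((g : ℝ) ^ 2) ^ 2 := by
        refine le_trans hKd2 ?_
        nlinarith [hgR, pow_nonneg (by linarith : (0:ℝ) ≤ (g:ℝ)) 3]
      exact le_of_pow_le_pow_left₀ two_ne_zero (by positivity) hg34
    have hdist : d < κ := by
      have hdle : d ≤ (g : ℝ) ^ 2 / K := by
        rw [le_div_iff₀ hK0, mul_comm]
        exact hKd
      exact lt_of_le_of_lt hdle hKκ
    have hdκ : d ≤ κ := hdist.le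
    have e2 := (abs_le.mp (h₃ f hf0 hf1 hdκ)).1
    have e1 := (abs_le.mp (h₁ f hf0 hf1 hdκ)).1
    rw [← hd] at e1 e2
    have hexp : E - (C * (g : ℝ) ^ 3 + C * (g : ℝ) ^ 2) ≤
        (K : ℝ) ^ 2 * F₂ f + (K : ℝ) * F₁ f := by
      have k2 : (K : ℝ) ^ 2 * (-(C * d ^ 2)) ≤ (K : ℝ) ^ 2 * (F₂ f - F₂ fstar) :=
        mul_le_mul_of_nonneg_left e2 (sq_nonneg _)
      have k1 : (K : ℝ) * (-(C * d)) ≤ (K : ℝ) * (F₁ f - F₁ fstar) :=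
        mul_le_mul_of_nonneg_left e1 hK0.le
      have k3 : C * ((K : ℝ) * d) ^ 2 ≤ C * (g : ℝ) ^ 3 :=
        mul_le_mul_of_nonneg_left hKd2 hC.le
      have k4 : C * ((K : ℝ) * d) ≤ C * (g : ℝ) ^ 2 :=
        mul_le_mul_of_nonneg_left hKd hC.le
      rw [hE]
      nlinarith [k2, k1, k3, k4]
    have hmem : Nv ∈ {Nv : Fin g → Fin (K + 1) | (∑ h, ((Nv h : ℕ)) = K) ∧
        eucDist (fun h => ((Nv h : ℕ) : ℝ) / (K : ℝ)) fstar < κ} := by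
      refine ⟨?_, ?_⟩
      · simp only [hval]; exact hMsum
      · exact hdist
    rw [simplexLaplaceSum]
    refine le_trans ?_ (Finset.single_le_sum
      (fun i _ => Set.indicator_nonneg (fun x _ => (Real.exp_pos _).le) i)
      (Finset.mem_univ Nv))
    rw [Set.indicator_of_mem hmem]
    have harg : (fun h => ((Nv h : ℕ) : ℝ) / (K : ℝ)) = f := rfl
    rw [harg]
    calc Real.exp (-(C * (g : ℝ) ^ 3 + C * (g : ℝ) ^ 2)) * Real.exp E
        = Real.exp (E - (C * (g : ℝ) ^ 3 + C * (g : ℝ) ^ 2)) := by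
          rw [← Real.exp_add]; ring_nf
      _ ≤ Real.exp ((K : ℝ) ^ 2 * F₂ f + (K : ℝ) * F₁ f) :=
          Real.exp_le_exp.mpr hexp
  · -- UPPER BOUND
    have upper_pt : ∀ Nv : Fin g → Fin (K + 1),
        Set.indicator
          {Nv : Fin g → Fin (K + 1) | (∑ h, ((Nv h : ℕ)) = K) ∧
            eucDist (fun h => ((Nv h : ℕ) : ℝ) / (K : ℝ)) fstar < κ}
          (fun Nv => Real.exp ((K : ℝ) ^ 2 * F₂ (fun h => ((Nv h : ℕ) : ℝ) / (K : ℝ)) +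
            (K : ℝ) * F₁ (fun h => ((Nv h : ℕ) : ℝ) / (K : ℝ)))) Nv ≤
        Real.exp E * Real.exp (C ^ 2 / (2 * c)) *
          ∏ h, Real.exp (-(t * (((Nv h : ℕ) : ℝ) - K * fstar h) ^ 2)) := by
      intro Nv
      by_cases hmem : Nv ∈ {Nv : Fin g → Fin (K + 1) | (∑ h, ((Nv h : ℕ)) = K) ∧
          eucDist (fun h => ((Nv h : ℕ) : ℝ) / (K : ℝ)) fstar < κ}
      · rw [Set.indicator_of_mem hmem]
        obtain ⟨hsum, hdist⟩ := hmem
        set f : Fin g → ℝ := fun h => ((Nv h : ℕ) : ℝ) / (K : ℝ) with hf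
        have hf0 : ∀ h, 0 ≤ f h := fun h =>
          div_nonneg (Nat.cast_nonneg _) (Nat.cast_nonneg _)
        have hf1 : ∑ h, f h = 1 := by
          have hthis : ∑ h, f h = ((∑ h, (Nv h : ℕ) : ℕ) : ℝ) / K := by
            push_cast
            rw [Finset.sum_div]
          rw [hthis, hsum]; field_simp
        set d : ℝ := eucDist f fstar with hd
        have hd0 : 0 ≤ d := Real.sqrt_nonneg _
        have hdκ : d ≤ κ := hdist.le
        have hd2 : d ^ 2 = ∑ h, (f h - fstar h) ^ 2 := by
          rw [hd, eucDist]
          exact Real.sq_sqrt (Finset.sum_nonneg fun h _ => sq_nonneg _)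
        have hKf : ∀ h, (K : ℝ) * f h = ((Nv h : ℕ) : ℝ) := by
          intro h; rw [hf]; field_simp
        have hx2 : ((K : ℝ) * d) ^ 2 = ∑ h, (((Nv h : ℕ) : ℝ) - K * fstar h) ^ 2 := by
          rw [mul_pow, hd2, Finset.mul_sum]
          apply Finset.sum_congr rfl
          intro h _
          rw [← hKf h]
          ring
        have e2 := h₂ f hf0 hf1 hdκ
        have e1 := (abs_le.mp (h₁ f hf0 hf1 hdκ)).2
        rw [← hd] at e1 e2
        have key : C * ((K : ℝ) * d) ≤ t * ((K : ℝ) * d) ^ 2 + C ^ 2 / (2 * c) := by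
          have hxeq : t * ((K : ℝ) * d) ^ 2 + C ^ 2 / (2 * c) - C * ((K : ℝ) * d) =
              (c * ((K : ℝ) * d) - C) ^ 2 / (2 * c) := by
            rw [ht]; field_simp; ring
          have hpos : 0 ≤ (c * ((K : ℝ) * d) - C) ^ 2 / (2 * c) := by positivity
          rw [← hxeq] at hpos
          linarith
        have hexp : (K : ℝ) ^ 2 * F₂ f + (K : ℝ) * F₁ f ≤
            E + C ^ 2 / (2 * c) - t * ((K : ℝ) * d) ^ 2 := by
          have k2 : (K : ℝ) ^ 2 * (F₂ f - F₂ fstar) ≤ (K : ℝ) ^ 2 * (-c * d ^ 2) :=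
            mul_le_mul_of_nonneg_left e2 (sq_nonneg _)
          have k1 : (K : ℝ) * (F₁ f - F₁ fstar) ≤ (K : ℝ) * (C * d) :=
            mul_le_mul_of_nonneg_left e1 hK0.le
          rw [hE]
          nlinarith [k2, k1, key]
        calc Real.exp ((K : ℝ) ^ 2 * F₂ f + (K : ℝ) * F₁ f)
            ≤ Real.exp (E + C ^ 2 / (2 * c) - t * ((K : ℝ) * d) ^ 2) :=
              Real.exp_le_exp.mpr hexp
          _ = Real.exp E * Real.exp (C ^ 2 / (2 * c)) *
                Real.exp (-(t * ((K : ℝ) * d) ^ 2)) := by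
              rw [← Real.exp_add, ← Real.exp_add]; ring_nf
          _ = Real.exp E * Real.exp (C ^ 2 / (2 * c)) *
                ∏ h, Real.exp (-(t * (((Nv h : ℕ) : ℝ) - K * fstar h) ^ 2)) := by
              congr 1
              rw [← Real.exp_sum]
              congr 1
              rw [hx2, Finset.mul_sum, ← Finset.sum_neg_distrib]
      · rw [Set.indicator_of_notMem hmem]
        positivity
    rw [simplexLaplaceSum]
    calc (∑ Nv : Fin g → Fin (K + 1),
          Set.indicator
            {Nv : Fin g → Fin (K + 1) | (∑ h, ((Nv h : ℕ)) = K) ∧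
              eucDist (fun h => ((Nv h : ℕ) : ℝ) / (K : ℝ)) fstar < κ}
            (fun Nv => Real.exp ((K : ℝ) ^ 2 * F₂ (fun h => ((Nv h : ℕ) : ℝ) / (K : ℝ)) +
              (K : ℝ) * F₁ (fun h => ((Nv h : ℕ) : ℝ) / (K : ℝ)))) Nv)
        ≤ ∑ Nv : Fin g → Fin (K + 1), Real.exp E * Real.exp (C ^ 2 / (2 * c)) *
            ∏ h, Real.exp (-(t * (((Nv h : ℕ) : ℝ) - K * fstar h) ^ 2)) :=
          Finset.sum_le_sum fun Nv _ => upper_pt Nv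
      _ = Real.exp E * Real.exp (C ^ 2 / (2 * c)) *
            ∑ Nv : Fin g → Fin (K + 1),
              ∏ h, Real.exp (-(t * (((Nv h : ℕ) : ℝ) - K * fstar h) ^ 2)) := by
          rw [← Finset.mul_sum]
      _ = Real.exp E * Real.exp (C ^ 2 / (2 * c)) *
            ∏ h, ∑ n : Fin (K + 1), Real.exp (-(t * (((n : ℕ) : ℝ) - K * fstar h) ^ 2)) := by
          congr 1
          rw [Finset.prod_univ_sum]
          rw [Fintype.piFinset_univ]
      _ ≤ Real.exp E * Real.exp (C ^ 2 / (2 * c)) * ∏ _h : Fin g, D := by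
          apply mul_le_mul_of_nonneg_left _ (by positivity)
          apply Finset.prod_le_prod
          · intro h _
            exact Finset.sum_nonneg fun n _ => (Real.exp_pos _).le
          · intro h _
            have hconv : ∑ n : Fin (K + 1),
                Real.exp (-(t * (((n : ℕ) : ℝ) - K * fstar h) ^ 2)) =
                ∑ n ∈ Finset.range (K + 1),
                  Real.exp (-(t * ((n : ℝ) - K * fstar h) ^ 2)) :=
              Fin.sum_univ_eq_sum_range
                (fun n => Real.exp (-(t * ((n : ℝ) - K * fstar h) ^ 2))) (K + 1)
            rw [hconv, hD]
            exact oneD t ht0 K ((K : ℝ) * fstar h)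
              (mul_nonneg hK0.le (hfpos h)) (by nlinarith [hfle h, hfpos h])
      _ = Real.exp (C ^ 2 / (2 * c)) * D ^ g * Real.exp E := by
          rw [Finset.prod_const, Finset.card_univ, Fintype.card_fin]
          ring
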